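/- For every n ≥ 1, |W_n| = ∑_{k=1}^{n−1} ∑_{j=0}^{n−k−1} f_{k−1} f_k. -/

import Mathlib

/-- The three-letter alphabet `{a, b, c}`. -/
inductive ABC : Type
  | a : ABC
  | b : ABC
  | c : ABC
  deriving DecidableEq, Repr

open ABC

/-- Words matching one of the alternatives `c`, `bc`, `a⁺b`, `a⁺c` of the regular
expression `(c ∪ bc ∪ a⁺b ∪ a⁺c)`. -/
def Atom (u : List ABC) : Prop :=
  u = [c] ∨ u = [b, c] ∨
    ∃ i : ℕ, 1 ≤ i ∧ (u = List.replicate i a ++ [b] ∨ u = List.replicate i a ++ [c])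

/-- Membership in `W_n`: words of length `n` of the form `a^i c u a c^j` (with `i, j ≥ 0`)
avoiding the subwords (i.e. blocks of consecutive letters) `bba`, `bbb`, `cba`, `cbb`. -/
def Wmem (n : ℕ) (w : List ABC) : Prop :=
  w.length = n ∧
  (∃ (i j : ℕ) (u : List ABC),
      w = List.replicate i a ++ [c] ++ u ++ [a] ++ List.replicate j c) ∧
  ¬ [b, b, a] <:+: w ∧ ¬ [b, b, b] <:+: w ∧ ¬ [c, b, a] <:+: w ∧ ¬ [c, b, b] <:+: w

instance : Fintype ABC := ⟨{a,b,c}, by intro x; cases x <;> simp⟩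

/-- avoidance of the four patterns -/
def Av (v : List ABC) : Prop :=
  ¬([b,b,a] <:+: v) ∧ ¬([b,b,b] <:+: v) ∧ ¬([c,b,a] <:+: v) ∧ ¬([c,b,b] <:+: v)

instance (v : List ABC) : Decidable (Av v) := by unfold Av; infer_instance

lemma Av_cons_a (v : List ABC) : Av (a :: v) ↔ Av v := by
  simp [Av, List.infix_cons_iff, List.cons_prefix_cons]

lemma Av_cons_c (v : List ABC) :
    Av (c :: v) ↔ Av v ∧ ¬([b,a] <+: v) ∧ ¬([b,b] <+: v) := by
  simp [Av, List.infix_cons_iff, List.cons_prefix_cons]; tauto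

lemma Av_cons_b (v : List ABC) :
    Av (b :: v) ↔ Av v ∧ ¬([b,a] <+: v) ∧ ¬([b,b] <+: v) := by
  simp [Av, List.infix_cons_iff, List.cons_prefix_cons]; tauto

def words : ℕ → Finset (List ABC)
  | 0 => {[]}
  | n+1 => ((Finset.univ : Finset ABC) ×ˢ words n).image fun p => p.1 :: p.2

lemma mem_words : ∀ {n : ℕ} {w : List ABC}, w ∈ words n ↔ w.length = n := by
  intro n
  induction n with
  | zero => intro w; simp [words, List.length_eq_zero_iff]
  | succ n ih =>
    intro w
    cases w with
    | nil => simp [words]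
    | cons x t => simp [words, ih]

def Nfin (m : ℕ) : Finset (List ABC) := (words m).filter fun u => Av (c :: (u ++ [a]))
def Mfin (m : ℕ) : Finset (List ABC) := (words m).filter fun u => Av (u ++ [a])

lemma Mfin_succ (m : ℕ) :
    Mfin (m+1) =
      ((Mfin m).image (a :: ·) ∪ (Nfin m).image (b :: ·)) ∪ (Nfin m).image (c :: ·) := by
  ext u
  cases u with
  | nil => simp [Mfin, Nfin, mem_words]
  | cons x u' =>
    simp only [Mfin, Nfin, Finset.mem_filter, Finset.mem_union, Finset.mem_image, mem_words,
      List.length_cons]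
    cases x with
    | a => simp [List.cons_append, Av_cons_a, eq_comm]
    | b =>
      have : Av (b :: (u' ++ [a])) ↔ Av (c :: (u' ++ [a])) := by
        rw [Av_cons_b, Av_cons_c]
      simp [List.cons_append, this, eq_comm]
    | c => simp [List.cons_append, eq_comm]

lemma Nfin_succ2 (m : ℕ) :
    Nfin (m+2) =
      ((Mfin (m+1)).image (a :: ·) ∪ (Nfin (m+1)).image (c :: ·)) ∪
        (Nfin m).image (fun u => b :: c :: u) := by
  ext u
  cases u with
  | nil => simp [Mfin, Nfin, mem_words]
  | cons x u' =>
    simp only [Mfin, Nfin, Finset.mem_filter, Finset.mem_union, Finset.mem_image, mem_words,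
      List.length_cons]
    cases x with
    | a =>
      have : Av (c :: a :: (u' ++ [a])) ↔ Av (u' ++ [a]) := by
        rw [Av_cons_c, Av_cons_a]
        simp [List.cons_prefix_cons]
      simp [List.cons_append, this, eq_comm]
    | c =>
      have : Av (c :: c :: (u' ++ [a])) ↔ Av (c :: (u' ++ [a])) := by
        rw [Av_cons_c (c :: _)]
        simp [List.cons_prefix_cons]
      simp [List.cons_append, this, eq_comm]
    | b =>
      cases u' with
      | nil => simp [Av, List.cons_prefix_cons]
      | cons y u'' =>
        cases y with
        | a =>
          have : ¬ Av (c :: b :: a :: (u'' ++ [a])) := by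
            rw [Av_cons_c]; simp [List.cons_prefix_cons]
          simp [List.cons_append, this]
        | b =>
          have : ¬ Av (c :: b :: b :: (u'' ++ [a])) := by
            rw [Av_cons_c]; simp [List.cons_prefix_cons]
          simp [List.cons_append, this]
        | c =>
          have : Av (c :: b :: c :: (u'' ++ [a])) ↔ Av (c :: (u'' ++ [a])) := by
            rw [Av_cons_c, Av_cons_b]
            simp [List.cons_prefix_cons]
          simp [List.cons_append, this, eq_comm]

lemma cons_inj' (x : ABC) : Function.Injective (x :: · : List ABC → List ABC) := by
  intro u v h; simpa using h

lemma Mfin_card_succ (m : ℕ) :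
    (Mfin (m+1)).card = (Mfin m).card + 2 * (Nfin m).card := by
  rw [Mfin_succ]
  rw [Finset.card_union_of_disjoint, Finset.card_union_of_disjoint]
  · rw [Finset.card_image_of_injective _ (cons_inj' a),
      Finset.card_image_of_injective _ (cons_inj' b),
      Finset.card_image_of_injective _ (cons_inj' c)]
    ring
  · simp only [Finset.disjoint_left, Finset.mem_image]
    rintro w ⟨u, _, rfl⟩ ⟨v, _, h⟩
    simp at h
  · simp only [Finset.disjoint_left, Finset.mem_union, Finset.mem_image]
    rintro w (⟨u, _, rfl⟩ | ⟨u, _, rfl⟩) ⟨v, _, h⟩ <;> simp at h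

lemma Nfin_card_succ2 (m : ℕ) :
    (Nfin (m+2)).card = (Mfin (m+1)).card + (Nfin (m+1)).card + (Nfin m).card := by
  rw [Nfin_succ2]
  rw [Finset.card_union_of_disjoint, Finset.card_union_of_disjoint]
  · rw [Finset.card_image_of_injective _ (cons_inj' a),
      Finset.card_image_of_injective _ (cons_inj' c),
      Finset.card_image_of_injective _ (show Function.Injective (fun u : List ABC => b :: c :: u) by
        intro u v h; simpa using h)]
  · simp only [Finset.disjoint_left, Finset.mem_image]
    rintro w ⟨u, _, rfl⟩ ⟨v, _, h⟩
    simp at h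
  · simp only [Finset.disjoint_left, Finset.mem_union, Finset.mem_image]
    rintro w (⟨u, _, rfl⟩ | ⟨u, _, rfl⟩) ⟨v, _, h⟩ <;> simp at h

lemma NMval : ∀ m : ℕ, (Nfin m).card = Nat.fib (m+1) * Nat.fib (m+2) ∧
    (Mfin m).card = Nat.fib (m+1) * Nat.fib (m+2) + Nat.fib m * Nat.fib m := by
  intro m
  induction m using Nat.strong_induction_on with
  | _ m ih =>
    match m with
    | 0 => exact ⟨by decide, by decide⟩
    | 1 => exact ⟨by decide, by decide⟩
    | (m+2) =>
      obtain ⟨hN1, hM1⟩ := ih (m+1) (by omega)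
      obtain ⟨hN0, hM0⟩ := ih m (by omega)
      constructor
      · rw [Nfin_card_succ2, hM1, hN1, hN0]
        have h4 : Nat.fib (m+4) = Nat.fib (m+2) + Nat.fib (m+3) := (Nat.fib_add_two ..)
        have h3 : Nat.fib (m+3) = Nat.fib (m+1) + Nat.fib (m+2) := (Nat.fib_add_two ..)
        have h2 : Nat.fib (m+2) = Nat.fib m + Nat.fib (m+1) := (Nat.fib_add_two ..)
        rw [h4, h3, h2]; ring
      · rw [Mfin_card_succ, hM1, hN1]
        have h4 : Nat.fib (m+4) = Nat.fib (m+2) + Nat.fib (m+3) := (Nat.fib_add_two ..)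
        have h3 : Nat.fib (m+3) = Nat.fib (m+1) + Nat.fib (m+2) := (Nat.fib_add_two ..)
        rw [h4, h3]; ring

lemma strip_left {x y z ℓ : ABC} : ∀ {i : ℕ} {v : List ABC},
    [x,y,z] <:+: List.replicate i ℓ ++ v → x ≠ ℓ → [x,y,z] <:+: v := by
  intro i
  induction i with
  | zero => intro v h _; simpa using h
  | succ i ih =>
    intro v h hx
    rw [List.replicate_succ, List.cons_append, List.infix_cons_iff] at h
    rcases h with h | h
    · rw [List.cons_prefix_cons] at h; exact absurd h.1 hx
    · exact ih h hx

lemma strip_right {x y z ℓ : ABC} {t : ℕ} {v : List ABC}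
    (h : [x,y,z] <:+: v ++ List.replicate t ℓ) (hz : z ≠ ℓ) : [x,y,z] <:+: v := by
  have h' : [z,y,x] <:+: List.replicate t ℓ ++ v.reverse := by
    have := List.reverse_infix.mpr h
    simpa [List.reverse_append, List.reverse_replicate] using this
  have h'' := strip_left h' hz
  have := List.reverse_infix.mpr h''
  simpa using this

lemma rep_append_inj {x y : ABC} (hxy : y ≠ x) : ∀ {i i' : ℕ} {v v' : List ABC},
    List.replicate i x ++ y :: v = List.replicate i' x ++ y :: v' → i = i' ∧ v = v' := by
  intro i
  induction i with
  | zero =>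
    intro i' v v' h
    cases i' with
    | zero => simpa using h
    | succ i' =>
      rw [List.replicate_succ] at h
      simp at h
      exact absurd h.1 hxy
  | succ i ih =>
    intro i' v v' h
    cases i' with
    | zero =>
      rw [List.replicate_succ] at h
      simp at h
      exact absurd h.1.symm hxy
    | succ i' =>
      rw [List.replicate_succ, List.replicate_succ] at h
      simp only [List.cons_append, List.cons.injEq, true_and] at h
      obtain ⟨h1, h2⟩ := ih h
      exact ⟨by omega, h2⟩

lemma decomp_unique {i j i' j' : ℕ} {u u' : List ABC}
    (h : List.replicate i a ++ [c] ++ u ++ [a] ++ List.replicate j c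
       = List.replicate i' a ++ [c] ++ u' ++ [a] ++ List.replicate j' c) :
    i = i' ∧ j = j' ∧ u = u' := by
  have h1 : List.replicate i a ++ c :: (u ++ [a] ++ List.replicate j c)
      = List.replicate i' a ++ c :: (u' ++ [a] ++ List.replicate j' c) := by
    simpa [List.append_assoc] using h
  obtain ⟨hi, h2⟩ := rep_append_inj (by simp) h1
  have h3 := congrArg List.reverse h2
  simp only [List.reverse_append, List.reverse_replicate, List.reverse_cons,
    List.reverse_singleton, List.append_assoc, List.singleton_append, List.nil_append] at h3
  obtain ⟨hj, h4⟩ := rep_append_inj (by simp) h3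
  exact ⟨hi, hj, by simpa using congrArg List.reverse h4⟩

/-- The decomposition map. -/
def emb (i t : ℕ) (u : List ABC) : List ABC :=
  List.replicate i a ++ [c] ++ u ++ [a] ++ List.replicate t c

def Dfin (n : ℕ) : Finset (List ABC) :=
  ((Finset.range (n-1)).sigma fun s => Finset.range (s+1)).biUnion fun p =>
    (Nfin (n-2-p.1)).image fun u => emb p.2 (p.1 - p.2) u

lemma emb_length (i t : ℕ) (u : List ABC) : (emb i t u).length = i + 1 + u.length + 1 + t := by
  simp [emb]; omega

lemma Wmem_iff_mem_Dfin {n : ℕ} {w : List ABC} : Wmem n w ↔ w ∈ Dfin n := by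
  constructor
  · rintro ⟨hl, ⟨i, j, u, rfl⟩, h1, h2, h3, h4⟩
    have hlen : i + 1 + u.length + 1 + j = n := by simp at hl; omega
    simp only [Dfin, Finset.mem_biUnion, Finset.mem_sigma, Finset.mem_range, Finset.mem_image]
    refine ⟨⟨i + j, i⟩, ⟨?_, ?_⟩, u, ?_, ?_⟩
    · show i + j < n - 1; omega
    · show i < i + j + 1; omega
    · show u ∈ Nfin (n - 2 - (i + j))
      rw [Nfin, Finset.mem_filter, mem_words]
      have hinf : (c :: (u ++ [a])) <:+: (List.replicate i a ++ [c] ++ u ++ [a] ++ List.replicate j c) :=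
        ⟨List.replicate i a, List.replicate j c, by simp [List.append_assoc]⟩
      refine ⟨by omega, ?_, ?_, ?_, ?_⟩
      · exact fun h => h1 (h.trans hinf)
      · exact fun h => h2 (h.trans hinf)
      · exact fun h => h3 (h.trans hinf)
      · exact fun h => h4 (h.trans hinf)
    · show emb i (i + j - i) u = _
      have hij : i + j - i = j := by omega
      rw [hij]; rfl
  · intro hw
    simp only [Dfin, Finset.mem_biUnion, Finset.mem_sigma, Finset.mem_range, Finset.mem_image] at hw
    obtain ⟨⟨s, i⟩, ⟨hs, hi⟩, u, hu, rfl⟩ := hw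
    rw [Nfin, Finset.mem_filter, mem_words] at hu
    obtain ⟨hul, hAv⟩ := hu
    obtain ⟨A1, A2, A3, A4⟩ := hAv
    have hw_eq : emb i (s - i) u
        = List.replicate i a ++ ((c :: (u ++ [a])) ++ List.replicate (s-i) c) := by
      simp [emb, List.append_assoc]
    refine ⟨?_, ⟨i, s - i, u, rfl⟩, ?_, ?_, ?_, ?_⟩
    · rw [emb_length, hul]; omega
    all_goals
      intro h
      rw [hw_eq] at h
      have h' := strip_right (strip_left h (by simp)) (by simp)
      first
        | exact A1 h' | exact A2 h' | exact A3 h' | exact A4 h'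

lemma Dfin_card (n : ℕ) :
    (Dfin n).card = ∑ s ∈ Finset.range (n-1), (s+1) * (Nat.fib (n-1-s) * Nat.fib (n-s)) := by
  rw [Dfin, Finset.card_biUnion]
  · rw [Finset.sum_sigma]
    refine Finset.sum_congr rfl fun s hs => ?_
    rw [Finset.mem_range] at hs
    have hcard : ∀ i : ℕ, ((Nfin (n-2-s)).image fun u => emb i (s - i) u).card
        = (Nfin (n-2-s)).card := by
      intro i
      apply Finset.card_image_of_injective
      intro u v huv
      exact (decomp_unique huv).2.2
    calc ∑ i ∈ Finset.range (s+1), ((Nfin (n-2-s)).image fun u => emb i (s - i) u).card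
        = ∑ i ∈ Finset.range (s+1), (Nfin (n-2-s)).card := by
          exact Finset.sum_congr rfl fun i _ => hcard i
      _ = (s+1) * (Nfin (n-2-s)).card := by
          rw [Finset.sum_const, Finset.card_range, smul_eq_mul]
      _ = (s+1) * (Nat.fib (n-1-s) * Nat.fib (n-s)) := by
          rw [(NMval (n-2-s)).1]
          have e1 : n-2-s+1 = n-1-s := by omega
          have e2 : n-2-s+2 = n-s := by omega
          rw [e1, e2]
  · rintro ⟨s, i⟩ hp ⟨s', i'⟩ hq hne
    simp only [Finset.mem_coe, Finset.mem_sigma, Finset.mem_range] at hp hq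
    simp only [Function.onFun, Finset.disjoint_left, Finset.mem_image]
    rintro w ⟨u, _, rfl⟩ ⟨v, _, h⟩
    obtain ⟨h1, h2, -⟩ := decomp_unique (h.symm : emb i (s - i) u = emb i' (s' - i') v)
    apply hne
    have hss : s = s' := by omega
    subst hss
    subst h1
    rfl

/-- For every `n ≥ 1`, `|W_n| = ∑_{k=1}^{n-1} ∑_{j=0}^{n-k-1} f_{k-1} f_k`, where the
Fibonacci numbers are indexed so that `f_0 = f_1 = 1` (so `f_j = Nat.fib (j+1)`). -/
theorem stmt15 (n : ℕ) (hn : 1 ≤ n) :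
    Nat.card {w : List ABC // Wmem n w}
      = ∑ k ∈ Finset.Icc 1 (n - 1), ∑ _j ∈ Finset.range (n - k),
          Nat.fib k * Nat.fib (k + 1) := by
  have hcong : Nat.card {w : List ABC // Wmem n w} = (Dfin n).card := by
    rw [Nat.card_congr (Equiv.subtypeEquivRight fun w => Wmem_iff_mem_Dfin)]
    rw [Nat.card_eq_fintype_card, Fintype.card_coe]
  rw [hcong, Dfin_card]
  refine Finset.sum_nbij' (fun s => n - 1 - s) (fun k => n - 1 - k) ?_ ?_ ?_ ?_ ?_
  · intro s hs
    rw [Finset.mem_range] at hs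
    show n - 1 - s ∈ Finset.Icc 1 (n - 1)
    rw [Finset.mem_Icc]
    omega
  · intro k hk
    rw [Finset.mem_Icc] at hk
    show n - 1 - k ∈ Finset.range (n - 1)
    rw [Finset.mem_range]
    omega
  · intro s hs
    rw [Finset.mem_range] at hs
    show n - 1 - (n - 1 - s) = s
    omega
  · intro k hk
    rw [Finset.mem_Icc] at hk
    show n - 1 - (n - 1 - k) = k
    omega
  · intro s hs
    rw [Finset.mem_range] at hs
    show (s + 1) * (Nat.fib (n-1-s) * Nat.fib (n-s))
      = ∑ _j ∈ Finset.range (n - (n - 1 - s)), Nat.fib (n - 1 - s) * Nat.fib ((n - 1 - s) + 1)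
    rw [Finset.sum_const, Finset.card_range, smul_eq_mul]
    have e1 : n - (n - 1 - s) = s + 1 := by omega
    have e2 : n - 1 - s + 1 = n - s := by omega
    rw [e1, e2]
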